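/- For all ordinals δ₀, δ₁, η: if δ₀ ≪ δ₁ {η} then ω^{δ₀} ≪ ω^{δ₁} {η}. -/

import Mathlib

open Ordinal Set

noncomputable section

/-- A cardinal is weakly inaccessible: uncountable, regular, and a limit cardinal. -/
def WeaklyInaccessible (c : Cardinal) : Prop :=
  Cardinal.aleph0 < c ∧ c.IsRegular ∧ ∀ x < c, Order.succ x < c

/-- `I` is (the initial ordinal of) the least weakly inaccessible cardinal. -/
def I : Ordinal := (sInf {c : Cardinal | WeaklyInaccessible c}).ord

/-- `Om α` is `Ω_α`: `0` for `α = 0` and the initial ordinal of `ℵ_α` otherwise. -/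
def Om (α : Ordinal) : Ordinal := if α = 0 then 0 else (Cardinal.aleph α).ord

/-- `R = {Ω_{μ+1} : μ < I} ∪ {I}`. -/
def R : Set Ordinal := {o | (∃ μ < I, o = Om (μ + 1)) ∨ o = I}

/-- Given the family of hulls at earlier stages, the collapse `ψ_σ`. -/
def psiOf (F : Set Ordinal → Set Ordinal) (σ : Ordinal) : Ordinal :=
  sInf ({β | β < σ ∧ σ ∈ F (Set.Iio β) ∧ F (Set.Iio β) ∩ Set.Iio σ ⊆ Set.Iio β} ∪ {σ})

instance : WellFoundedRelation Ordinal := ⟨(· < ·), Ordinal.lt_wf⟩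

/-- `H α X` is the least set of ordinals containing `X ∪ {0, I}` and closed under
ordinal addition, `β ↦ ω^β`, `β ↦ Ω_β`, and `(σ, β) ↦ ψ_σ β` for `σ ∈ R` and `β < α`. -/
def H (α : Ordinal) (X : Set Ordinal) : Set Ordinal :=
  ⋂₀ {Y : Set Ordinal | X ∪ {0, I} ⊆ Y ∧
      (∀ γ ∈ Y, ∀ δ ∈ Y, γ + δ ∈ Y) ∧
      (∀ γ ∈ Y, Ordinal.omega0 ^ γ ∈ Y) ∧
      (∀ γ ∈ Y, Om γ ∈ Y) ∧
      (∀ σ ∈ R, ∀ β ∈ Y, β < α → σ ∈ Y → psiOf (H β) σ ∈ Y)}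
termination_by α
decreasing_by assumption

/-- The collapsing function `ψ_σ α`. -/
def psi (σ α : Ordinal) : Ordinal := psiOf (H α) σ

/-- The relation `δ₀ ≪ δ₁ {η}`. -/
def llr (η δ₀ δ₁ : Ordinal) : Prop :=
  δ₀ < δ₁ ∧ ∀ σ ∈ R, ∀ α : Ordinal,
    δ₁ ∈ H α (Set.Iio (psi σ α)) → η ∈ H α (Set.Iio (psi σ α)) → δ₀ ∈ H α (Set.Iio (psi σ α))

def Good (α : Ordinal) (X : Set Ordinal) (Y : Set Ordinal) : Prop :=
  X ∪ {0, I} ⊆ Y ∧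
      (∀ γ ∈ Y, ∀ δ ∈ Y, γ + δ ∈ Y) ∧
      (∀ γ ∈ Y, Ordinal.omega0 ^ γ ∈ Y) ∧
      (∀ γ ∈ Y, Om γ ∈ Y) ∧
      (∀ σ ∈ R, ∀ β ∈ Y, β < α → σ ∈ Y → psiOf (H β) σ ∈ Y)

lemma H_eq (α : Ordinal) (X : Set Ordinal) : H α X = ⋂₀ {Y | Good α X Y} := by
  rw [H]; rfl

lemma H_subset {α X Y} (hY : Good α X Y) : H α X ⊆ Y := by
  rw [H_eq]; exact sInter_subset_of_mem hY

lemma good_H (α : Ordinal) (X : Set Ordinal) : Good α X (H α X) := by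
  rw [H_eq]
  refine ⟨fun x hx Y hY => hY.1 hx,
    fun γ hγ δ hδ Y hY => hY.2.1 γ (hγ Y hY) δ (hδ Y hY),
    fun γ hγ Y hY => hY.2.2.1 γ (hγ Y hY),
    fun γ hγ Y hY => hY.2.2.2.1 γ (hγ Y hY),
    fun σ hσ β hβ hβα hσ' Y hY => hY.2.2.2.2 σ hσ β (hβ Y hY) hβα (hσ' Y hY)⟩
lemma R_ex {σ : Ordinal.{u}} (hσ : σ ∈ R) :
    (∃ c : Cardinal.{u}, Cardinal.aleph0 < c ∧ σ = c.ord) ∨ σ = 0 := by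
  rcases hσ with ⟨μ, _, rfl⟩ | rfl
  · refine Or.inl ⟨Cardinal.aleph (μ + 1), ?_, ?_⟩
    · exact Cardinal.aleph_zero ▸ Cardinal.aleph_lt_aleph.2
        (by rw [Ordinal.add_one_eq_succ]; exact Order.bot_lt_succ μ)
    · rw [Om, if_neg]; intro h; rw [Ordinal.add_one_eq_succ] at h
      exact (Order.succ_ne_bot μ) h
  · by_cases hne : ({c : Cardinal.{u} | WeaklyInaccessible c}).Nonempty
    · have hmem : WeaklyInaccessible (sInf {c : Cardinal | WeaklyInaccessible c}) :=
        csInf_mem (s := {c : Cardinal | WeaklyInaccessible c}) hne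
      exact Or.inl ⟨sInf {c : Cardinal | WeaklyInaccessible c}, hmem.1, rfl⟩
    · rw [Set.not_nonempty_iff_eq_empty] at hne
      refine Or.inr ?_
      rw [I, hne, Cardinal.sInf_empty]
      exact Cardinal.ord_zero

lemma psiOf_le {F : Set Ordinal → Set Ordinal} {σ : Ordinal} : psiOf F σ ≤ σ := by
  rw [psiOf]
  exact csInf_le (OrderBot.bddBelow _) (Or.inr rfl)

lemma card_omega0_opow_le (a : Ordinal) : (Ordinal.omega0 ^ a).card ≤ max Cardinal.aleph0 a.card := by
  induction a using Ordinal.limitRecOn with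
  | zero => simp
  | add_one a ih =>
      rw [opow_add_one, Ordinal.card_mul, Ordinal.card_omega0]
      calc (Ordinal.omega0 ^ a).card * Cardinal.aleph0
          ≤ (max Cardinal.aleph0 a.card) * Cardinal.aleph0 :=
            mul_le_mul' ih le_rfl
        _ = max Cardinal.aleph0 a.card := by
            rw [Cardinal.mul_eq_max (le_max_left _ _) le_rfl, max_eq_left (le_max_left _ _)]
        _ ≤ max Cardinal.aleph0 (a + 1).card :=
            max_le_max le_rfl (Ordinal.card_le_card (le_of_lt (lt_add_one a)))
  | limit a ha ih =>
      have hne : Nonempty (Set.Iio a) := ⟨⟨0, ha.pos⟩⟩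
      have key : Ordinal.omega0 ^ a = ⨆ b : Set.Iio a, Ordinal.omega0 ^ (b : Ordinal) := by
        apply le_antisymm
        · exact (Ordinal.opow_le_of_isSuccLimit Ordinal.omega0_ne_zero ha).2
            fun b hb => Ordinal.le_iSup (fun b : Set.Iio a => Ordinal.omega0 ^ (b : Ordinal)) ⟨b, hb⟩
        · exact Ordinal.iSup_le fun b =>
            Ordinal.opow_le_opow_right Ordinal.omega0_pos (le_of_lt b.2)
      rw [key]
      have h1 := Ordinal.card_iSup_Iio_le_card_mul_iSup (fun b => Ordinal.omega0 ^ (b : Ordinal)) (o := a)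
      rw [Cardinal.lift_id] at h1
      refine h1.trans ?_
      have h2 : (⨆ b : Set.Iio a, (Ordinal.omega0 ^ (b : Ordinal)).card) ≤ max Cardinal.aleph0 a.card :=
        ciSup_le' fun b => (ih b b.2).trans (max_le_max le_rfl (Ordinal.card_le_card (le_of_lt b.2)))
      calc a.card * (⨆ b : Set.Iio a, (Ordinal.omega0 ^ (b : Ordinal)).card)
          ≤ (max Cardinal.aleph0 a.card) * (max Cardinal.aleph0 a.card) :=
            mul_le_mul' (le_max_right _ _) h2
        _ = max Cardinal.aleph0 a.card := Cardinal.mul_eq_self (le_max_left _ _)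

lemma omega0_opow_lt_ord {c : Cardinal} (hc : Cardinal.aleph0 < c) {a : Ordinal}
    (ha : a < c.ord) : Ordinal.omega0 ^ a < c.ord := by
  rw [Cardinal.lt_ord] at ha ⊢
  exact (card_omega0_opow_le a).trans_lt (max_lt hc ha)

lemma ord_epsilon {c : Cardinal} (hc : Cardinal.aleph0 < c) :
    Ordinal.omega0 ^ c.ord = c.ord := by
  apply le_antisymm
  · exact (Ordinal.opow_le_of_isSuccLimit Ordinal.omega0_ne_zero (Cardinal.isSuccLimit_ord hc.le)).2
      fun b hb => (omega0_opow_lt_ord hc hb).le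
  · exact Ordinal.right_le_opow _ Ordinal.one_lt_omega0

lemma omega0_opow_inj {a b : Ordinal} (h : Ordinal.omega0 ^ a = Ordinal.omega0 ^ b) : a = b := by
  rcases lt_trichotomy a b with hab | hab | hab
  · exact absurd h (((Ordinal.opow_lt_opow_iff_right Ordinal.one_lt_omega0).2 hab).ne)
  · exact hab
  · exact absurd h.symm (((Ordinal.opow_lt_opow_iff_right Ordinal.one_lt_omega0).2 hab).ne)

lemma psiOf_epsilon {σ : Ordinal.{u}}
    (hσ : σ ∈ R) (β : Ordinal.{u}) :
    psiOf (H β) σ = 0 ∨ Ordinal.omega0 ^ psiOf (H β) σ = psiOf (H β) σ := by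
  rcases R_ex hσ with ⟨c, hc, rfl⟩ | h0
  case inr => exact Or.inl (by rw [h0]; exact nonpos_iff_eq_zero.1 (h0 ▸ psiOf_le))
  have hψT : psiOf (H β) c.ord ∈
      ({b | b < c.ord ∧ c.ord ∈ H β (Set.Iio b) ∧ H β (Set.Iio b) ∩ Set.Iio c.ord ⊆ Set.Iio b}
        ∪ {c.ord} : Set Ordinal) := by
    rw [psiOf]; exact csInf_mem ⟨c.ord, Or.inr rfl⟩
  set ψ := psiOf (H β) c.ord with hψdef
  rcases hψT with ⟨hψσ, hσH, hsub⟩ | hψeq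
  · refine Or.inr ?_
    have G := good_H β (Set.Iio ψ)
    have hmem : ∀ γ < ψ, γ ∈ H β (Set.Iio ψ) := fun γ hγ => G.1 (Set.mem_union_left _ hγ)
    have h0 : (0 : Ordinal) ∈ H β (Set.Iio ψ) := G.1 (Set.mem_union_right _ (Set.mem_insert _ _))
    have hlt : ∀ x ∈ H β (Set.Iio ψ), x < c.ord → x < ψ := fun x hx hxσ => hsub ⟨hx, hxσ⟩
    have hσ1 : (1 : Ordinal) < c.ord := by
      rw [Cardinal.lt_ord, Ordinal.card_one]; exact Cardinal.one_lt_aleph0.trans hc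
    have h1 : (1 : Ordinal) ∈ H β (Set.Iio ψ) := by
      have := G.2.2.1 0 h0; rwa [opow_zero] at this
    have hψ1 : 1 < ψ := hlt 1 h1 hσ1
    have hcl : ∀ γ < ψ, Ordinal.omega0 ^ γ < ψ := fun γ hγ =>
      hlt _ (G.2.2.1 γ (hmem γ hγ)) (omega0_opow_lt_ord hc (hγ.trans hψσ))
    have hlim : Order.IsSuccLimit ψ := by
      refine Ordinal.isSuccLimit_iff.2 ⟨ne_of_gt (zero_lt_one.trans hψ1), Order.isSuccPrelimit_of_succ_lt fun γ hγ => ?_⟩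
      rw [← Ordinal.add_one_eq_succ]
      exact hlt _ (G.2.1 γ (hmem γ hγ) 1 h1)
        ((Ordinal.isPrincipal_add_ord hc.le) (hγ.trans hψσ) hσ1)
    exact le_antisymm ((Ordinal.opow_le_of_isSuccLimit Ordinal.omega0_ne_zero hlim).2
      fun γ hγ => (hcl γ hγ).le) (Ordinal.right_le_opow _ Ordinal.one_lt_omega0)
  · rw [Set.mem_singleton_iff] at hψeq
    exact Or.inr (hψeq ▸ ord_epsilon hc)

lemma exp_mem (α p : Ordinal.{u})
    {γ : Ordinal} (hγ : γ ∈ H α (Set.Iio p)) :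
    ∀ e, Ordinal.omega0 ^ e = γ → e ∈ H α (Set.Iio p) := by
  have G := good_H α (Set.Iio p)
  set S : Set Ordinal :=
    {γ | γ ∈ H α (Set.Iio p) ∧ ∀ e, Ordinal.omega0 ^ e = γ → e ∈ H α (Set.Iio p)} with hS
  have hIeps : I.{u} = 0 ∨ Ordinal.omega0 ^ I.{u} = I.{u} := by
    rcases R_ex (σ := I.{u}) (Or.inr rfl) with ⟨c, hc, hI⟩ | hI
    · exact Or.inr (by rw [hI]; exact ord_epsilon hc)
    · exact Or.inl hI
  have goodS : Good α (Set.Iio p) S := by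
    refine ⟨?_, ?_, ?_, ?_, ?_⟩
    · rintro x (hx | hx)
      · exact ⟨G.1 (Set.mem_union_left _ hx), fun e he =>
          G.1 (Set.mem_union_left _ (lt_of_le_of_lt
            ((Ordinal.right_le_opow e Ordinal.one_lt_omega0).trans_eq he) hx))⟩
      · rcases hx with rfl | hx
        · exact ⟨G.1 (Set.mem_union_right _ (Set.mem_insert _ _)), fun e he =>
            absurd he (Ordinal.opow_ne_zero e Ordinal.omega0_ne_zero)⟩
        · rw [Set.mem_singleton_iff] at hx; subst hx
          refine ⟨G.1 (Set.mem_union_right _ (Set.mem_insert_of_mem _ rfl)), fun e he => ?_⟩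
          rcases hIeps with hI0 | hIe
          · rw [hI0] at he
            exact absurd he (Ordinal.opow_ne_zero e Ordinal.omega0_ne_zero)
          · have : e = I := omega0_opow_inj (he.trans hIe.symm)
            rw [this]; exact G.1 (Set.mem_union_right _ (Set.mem_insert_of_mem _ rfl))
    · rintro γ ⟨hγH, hγe⟩ δ ⟨hδH, hδe⟩
      refine ⟨G.2.1 γ hγH δ hδH, fun e he => ?_⟩
      rcases eq_or_ne δ 0 with rfl | hδ0
      · rw [add_zero] at he; exact hγe e he
      · have hγle : γ ≤ Ordinal.omega0 ^ e := (le_self_add (a := γ) (b := δ)).trans he.symm.le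
        rcases hγle.lt_or_eq with hγlt | hγeq
        · have hδle : δ ≤ Ordinal.omega0 ^ e := (le_add_self (a := δ) (b := γ)).trans he.symm.le
          rcases hδle.lt_or_eq with hδlt | hδeq
          · exact absurd he.symm (Ordinal.principal_add_omega0_opow e hγlt hδlt).ne
          · exact hδe e hδeq.symm
        · exfalso
          have h2 : γ + 0 < γ + δ := (add_lt_add_iff_left γ).2 (pos_iff_ne_zero.2 hδ0)
          rw [add_zero] at h2
          have h3 : γ + δ = γ := he.symm.trans hγeq.symm
          rw [h3] at h2
          exact lt_irrefl _ h2
    · rintro γ ⟨hγH, hγe⟩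
      exact ⟨G.2.2.1 γ hγH, fun e he => (omega0_opow_inj he : e = γ) ▸ hγH⟩
    · rintro γ ⟨hγH, hγe⟩
      refine ⟨G.2.2.2.1 γ hγH, fun e he => ?_⟩
      rcases eq_or_ne γ 0 with rfl | hγ0
      · rw [Om, if_pos rfl] at he
        exact absurd he (Ordinal.opow_ne_zero e Ordinal.omega0_ne_zero)
      · have hOm : Om γ = (Cardinal.aleph γ).ord := by rw [Om, if_neg hγ0]
        have hal : Cardinal.aleph0 < Cardinal.aleph γ :=
          Cardinal.aleph_zero ▸ Cardinal.aleph_lt_aleph.2 (pos_iff_ne_zero.2 hγ0)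
        have heps : Ordinal.omega0 ^ Om γ = Om γ := by rw [hOm]; exact ord_epsilon hal
        have : e = Om γ := omega0_opow_inj (he.trans heps.symm)
        rw [this]; exact G.2.2.2.1 γ hγH
    · rintro σ hσR β ⟨hβH, hβe⟩ hβα ⟨hσH, hσe⟩
      refine ⟨G.2.2.2.2 σ hσR β hβH hβα hσH, fun e he => ?_⟩
      rcases psiOf_epsilon hσR β with hp0 | heps
      · rw [hp0] at he
        exact absurd he (Ordinal.opow_ne_zero e Ordinal.omega0_ne_zero)
      · have : e = psiOf (H β) σ := omega0_opow_inj (he.trans heps.symm)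
        rw [this]; exact G.2.2.2.2 σ hσR β hβH hβα hσH
  exact ((H_subset goodS) hγ).2

theorem stmt11 (hex : ∃ c : Cardinal, WeaklyInaccessible c)
    (δ₀ δ₁ η : Ordinal) (h : llr η δ₀ δ₁) :
    llr η (Ordinal.omega0 ^ δ₀) (Ordinal.omega0 ^ δ₁) := by
  obtain ⟨hlt, hcl⟩ := h
  refine ⟨(Ordinal.opow_lt_opow_iff_right Ordinal.one_lt_omega0).2 hlt, ?_⟩
  intro σ hσ α h1 h2
  have hδ1 : δ₁ ∈ H α (Set.Iio (psi σ α)) := exp_mem α (psi σ α) h1 δ₁ rfl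
  have hδ0 : δ₀ ∈ H α (Set.Iio (psi σ α)) := hcl σ hσ α hδ1 h2
  exact (good_H α _).2.2.1 δ₀ hδ0

end
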